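/- Let R be a k-Osserman algebraic curvature tensor on a vector space of signature (p,q). Let σ be a nondegenerate (k-1)-plane and x_t = x₁ + t x₂ with x₁ complex null, (x₁,x₂)≠0, x₁,x₂ orthogonal to σ. Set g(t)=(x_t,x_t). Then for all small t>0 with g(t)≠0, g(t)^i c_i = trace{[g(t)J_R(σ) + J_R(x_t)]^i}, where c_i = trace{J_R(π)^i} for any nondegenerate k-plane π; taking t→0 yields trace{J_R(x₁)^i} = 0. -/

import Mathlib

open Polynomial


/-- The key computation in the proof that a `k`-Osserman curvature tensor has nilpotent
Jacobi operator on null vectors: with `σ` a (complex) orthonormal `(k-1)`-frame,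
`x₁` null, `(x₁,x₂) ≠ 0`, `x₁,x₂ ⟂ σ`, `x_t = x₁ + t x₂`, `g(t) = (x_t,x_t)`, one has
`g(t)^i c_i = trace{[g(t)J_R(σ) + J_R(x_t)]^i}` whenever `g(t) ≠ 0`, and letting
`t → 0` gives `trace{J_R(x₁)^i} = 0`. -/
theorem kOsserman_limit_computation
    (V : Type*) [AddCommGroup V] [Module ℂ V] [FiniteDimensional ℂ V]
    (B : LinearMap.BilinForm ℂ V) (hBsymm : ∀ x y, B x y = B y x)
    (hBnd : B.Nondegenerate)
    (R : V →ₗ[ℂ] V →ₗ[ℂ] V →ₗ[ℂ] V →ₗ[ℂ] ℂ)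
    (hR1 : ∀ x y z w, R x y z w = R z w x y)
    (hR2 : ∀ x y z w, R x y z w = - R y x z w)
    (hR3 : ∀ x y z w, R x y z w + R y z x w + R z x y w = 0)
    (J : V → Module.End ℂ V)
    (hJ : ∀ x y w, B (J x y) w = R y x x w)
    (k : ℕ) (hk1 : 1 ≤ k) (hkm : k ≤ Module.finrank ℂ V - 1)
    (c : ℕ → ℂ)
    (hOss : ∀ f : Fin k → V, (∀ i j, B (f i) (f j) = if i = j then 1 else 0) →
      ∀ i : ℕ, LinearMap.trace ℂ V ((∑ a, J (f a)) ^ i) = c i)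
    (e : Fin (k - 1) → V)
    (he : ∀ i j, B (e i) (e j) = if i = j then 1 else 0)
    (x₁ x₂ : V) (hx₁ : B x₁ x₁ = 0) (hx₁₂ : B x₁ x₂ ≠ 0)
    (hperp₁ : ∀ i, B x₁ (e i) = 0) (hperp₂ : ∀ i, B x₂ (e i) = 0) :
    (∀ t : ℂ, B (x₁ + t • x₂) (x₁ + t • x₂) ≠ 0 → ∀ i : ℕ,
      (B (x₁ + t • x₂) (x₁ + t • x₂)) ^ i * c i =
        LinearMap.trace ℂ V
          ((B (x₁ + t • x₂) (x₁ + t • x₂) • (∑ a, J (e a)) + J (x₁ + t • x₂)) ^ i)) ∧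
    (∀ i : ℕ, 1 ≤ i → LinearMap.trace ℂ V ((J x₁) ^ i) = 0) := by
  classical
  obtain ⟨m, rfl⟩ : ∃ m, k = m + 1 := ⟨k - 1, (Nat.succ_pred_eq_of_pos hk1).symm⟩
  -- extensionality from nondegeneracy
  have hBext : ∀ u v : V, (∀ w, B u w = B v w) → u = v := by
    intro u v h
    have h0 : ∀ w, B (u - v) w = 0 := by
      intro w; simp [map_sub, LinearMap.sub_apply, h w]
    have := hBnd.1 _ h0
    exact sub_eq_zero.mp this
  have hEext : ∀ S T : Module.End ℂ V, (∀ y w, B (S y) w = B (T y) w) → S = T := by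
    intro S T h
    ext y
    exact hBext _ _ (h y)
  -- J is quadratic
  have hJsmul : ∀ (z : ℂ) (x : V), J (z • x) = (z * z) • J x := by
    intro z x
    apply hEext
    intro y w
    rw [hJ]
    simp only [map_smul, LinearMap.smul_apply, smul_eq_mul]
    rw [hJ]
    ring
  set M : Module.End ℂ V := J (x₁ + x₂) - J x₁ - J x₂ with hM
  have hMB : ∀ y w, B (M y) w = R y x₁ x₂ w + R y x₂ x₁ w := by
    intro y w
    simp only [hM, LinearMap.sub_apply, map_sub, LinearMap.sub_apply]
    rw [hJ, hJ, hJ]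
    simp only [map_add, LinearMap.add_apply]
    ring
  have hJt : ∀ t : ℂ, J (x₁ + t • x₂) = J x₁ + t • M + (t * t) • J x₂ := by
    intro t
    apply hEext
    intro y w
    rw [hJ]
    simp only [LinearMap.add_apply, map_add, LinearMap.smul_apply, map_smul,
      smul_eq_mul]
    rw [hJ, hJ, hMB]
    ring
  set Jσ : Module.End ℂ V := ∑ a, J (e a) with hJσ
  have hg : ∀ t : ℂ, B (x₁ + t • x₂) (x₁ + t • x₂)
      = t * (2 * B x₁ x₂) + (t * t) * B x₂ x₂ := by
    intro t
    simp only [map_add, map_smul, LinearMap.add_apply, LinearMap.smul_apply,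
      smul_eq_mul, hx₁]
    rw [hBsymm x₂ x₁]
    ring
  -- Part 1
  have part1 : ∀ t : ℂ, B (x₁ + t • x₂) (x₁ + t • x₂) ≠ 0 → ∀ i : ℕ,
      (B (x₁ + t • x₂) (x₁ + t • x₂)) ^ i * c i =
        LinearMap.trace ℂ V
          ((B (x₁ + t • x₂) (x₁ + t • x₂) • Jσ + J (x₁ + t • x₂)) ^ i) := by
    intro t hgt i
    set g : ℂ := B (x₁ + t • x₂) (x₁ + t • x₂) with hgdef
    obtain ⟨s, hs⟩ : ∃ s : ℂ, s ^ 2 = g := IsAlgClosed.exists_pow_nat_eq g (by norm_num)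
    have hs0 : s ≠ 0 := by
      intro h; rw [h] at hs; simp at hs; exact hgt hs.symm
    set v : V := s⁻¹ • (x₁ + t • x₂) with hv
    set f : Fin (m + 1) → V := Fin.snoc (fun a : Fin m => e a) v with hf
    have hvv : B v v = 1 := by
      simp only [hv, map_smul, LinearMap.smul_apply, smul_eq_mul, ← hgdef]
      field_simp
      rw [← hs]
    have hfortho : ∀ i j, B (f i) (f j) = if i = j then 1 else 0 := by
      intro i j
      refine Fin.lastCases ?_ ?_ i
      · refine Fin.lastCases ?_ ?_ j
        · simp [hf, Fin.snoc_last, hvv]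
        · intro j'
          have hne : Fin.last m ≠ Fin.castSucc j' := ((Fin.castSucc_lt_last j').ne).symm
          simp only [hf, Fin.snoc_last, Fin.snoc_castSucc, if_neg hne]
          simp [hv, map_smul, LinearMap.smul_apply, hperp₁, hperp₂]
      · intro i'
        refine Fin.lastCases ?_ ?_ j
        · have hne : Fin.castSucc i' ≠ Fin.last m := (Fin.castSucc_lt_last i').ne
          simp only [hf, Fin.snoc_last, Fin.snoc_castSucc, if_neg hne]
          rw [hBsymm]
          simp [hv, map_smul, LinearMap.smul_apply, hperp₁, hperp₂]
        · intro j'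
          simp only [hf, Fin.snoc_castSucc]
          rw [he i' j']
          simp [Fin.castSucc_inj]
    have htr := hOss f hfortho i
    have hsum : ∑ a, J (f a) = Jσ + (s⁻¹ * s⁻¹) • J (x₁ + t • x₂) := by
      rw [Fin.sum_univ_castSucc]
      simp only [hf, Fin.snoc_castSucc, Fin.snoc_last, hv, hJsmul, hJσ]
      rfl
    have hcoe : g * (s⁻¹ * s⁻¹) = 1 := by
      field_simp
      rw [← hs]
    have hgsum : g • (∑ a, J (f a)) = g • Jσ + J (x₁ + t • x₂) := by
      rw [hsum, smul_add, smul_smul, hcoe, one_smul]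
    rw [← hgsum, _root_.smul_pow, map_smul, htr, smul_eq_mul]
  refine ⟨part1, ?_⟩
  -- Part 2
  intro i hi
  set b2 : ℂ := 2 * B x₁ x₂ with hb2
  set a2 : ℂ := B x₂ x₂ with ha2
  set N₀ : Module.End ℂ V := J x₁ with hN₀
  set N₁ : Module.End ℂ V := M + b2 • Jσ with hN₁
  set N₂ : Module.End ℂ V := J x₂ + a2 • Jσ with hN₂
  have hA : ∀ t : ℂ, B (x₁ + t • x₂) (x₁ + t • x₂) • Jσ + J (x₁ + t • x₂)
      = N₀ + t • N₁ + (t * t) • N₂ := by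
    intro t
    rw [hg t, hJt t, hN₀, hN₁, hN₂]
    module
  -- matrix/polynomial setup
  set bas := Module.finBasis ℂ V with hbas
  set ψ := LinearMap.toMatrixAlgEquiv bas with hψ
  have htrψ : ∀ φ : Module.End ℂ V, LinearMap.trace ℂ V φ = Matrix.trace (ψ φ) := by
    intro φ
    rw [LinearMap.trace_eq_matrix_trace ℂ bas]
    rfl
  set P : Matrix _ _ ℂ[X] :=
    (ψ N₀).map C + (X : ℂ[X]) • (ψ N₁).map C + ((X : ℂ[X]) * X) • (ψ N₂).map C with hP
  have hPev : ∀ t : ℂ, P.map (eval t) = ψ (N₀ + t • N₁ + (t * t) • N₂) := by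
    intro t
    ext a b
    simp only [hP, Matrix.add_apply, Matrix.smul_apply, Matrix.map_apply, smul_eq_mul,
      map_add, map_smul, eval_add, eval_mul, eval_X, eval_C, LinearMap.add_apply,
      LinearMap.smul_apply, Matrix.map_apply]
  set q : ℂ[X] := Matrix.trace (P ^ i) with hq
  have hqev : ∀ t : ℂ, q.eval t
      = LinearMap.trace ℂ V ((N₀ + t • N₁ + (t * t) • N₂) ^ i) := by
    intro t
    have h1 : (P ^ i).map (eval t) = (P.map (eval t)) ^ i := by
      have := map_pow ((evalRingHom t).mapMatrix) P i
      simpa [RingHom.mapMatrix_apply, coe_evalRingHom] using this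
    have h2 : Matrix.trace ((P ^ i).map (eval t)) = (Matrix.trace (P ^ i)).eval t := by
      simp [Matrix.trace, Matrix.diag, Matrix.map_apply, eval_finset_sum]
    rw [htrψ, map_pow, ← hPev t, ← h1, h2, hq]
  set gP : ℂ[X] := X * C b2 + X ^ 2 * C a2 with hgP
  have hgPev : ∀ t : ℂ, gP.eval t = B (x₁ + t • x₂) (x₁ + t • x₂) := by
    intro t
    rw [hg t]
    simp only [hgP, eval_add, eval_mul, eval_pow, eval_X, eval_C]
    ring
  have hcoeff : gP.coeff 1 = b2 := by
    simp [hgP, coeff_add, coeff_mul_C, coeff_X_one, coeff_X_pow]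
  have hb2ne : b2 ≠ 0 := by
    rw [hb2]; exact mul_ne_zero two_ne_zero hx₁₂
  have hgP0 : gP ≠ 0 := by
    intro h
    exact hb2ne (by rw [← hcoeff, h, coeff_zero])
  set r : ℂ[X] := gP ^ i * C (c i) - q with hr
  have hroots : {t : ℂ | r.IsRoot t}.Infinite := by
    have hfin : {t : ℂ | gP.IsRoot t}.Finite := Polynomial.finite_setOf_isRoot hgP0
    refine Set.Infinite.mono ?_ hfin.infinite_compl
    intro t ht
    simp only [Set.mem_compl_iff, Set.mem_setOf_eq, IsRoot] at ht ⊢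
    have hgt : B (x₁ + t • x₂) (x₁ + t • x₂) ≠ 0 := by
      rw [← hgPev t]; exact ht
    have := part1 t hgt i
    rw [hA t, ← hqev t] at this
    rw [hr]
    simp only [eval_sub, eval_mul, eval_pow, eval_C, hgPev t]
    rw [this]
    ring
  have hr0 : r = 0 := Polynomial.eq_zero_of_infinite_isRoot r hroots
  have h0 : r.eval 0 = 0 := by rw [hr0]; simp
  rw [hr] at h0
  simp only [eval_sub, eval_mul, eval_pow, eval_C] at h0
  have hgP00 : gP.eval 0 = 0 := by simp [hgP]
  rw [hgP00, zero_pow (by omega), zero_mul, zero_sub, neg_eq_zero] at h0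
  rw [hqev 0] at h0
  simpa using h0
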